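/- For the simple symmetric random walk on ℤ² started at 0, for every n ≥ 0 one has P(S_{2n} = 0) = ( C(2n,n) · 2^{−2n} )², where C(2n,n) is the central binomial coefficient; moreover P(S_{2n+1} = 0) = 0. -/

import Mathlib

/-- Step distribution of the simple symmetric random walk on `ℤ²`:
uniform on the four unit vectors. -/
noncomputable def step (z : ℤ × ℤ) : ℝ :=
  if z = (1, 0) ∨ z = (-1, 0) ∨ z = (0, 1) ∨ z = (0, -1) then 1 / 4 else 0

/-- `q n x = P(S_n = x)` for the simple symmetric random walk on `ℤ²` started at `0`,
defined via the Chapman–Kolmogorov recursion. -/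
noncomputable def q : ℕ → ℤ × ℤ → ℝ
  | 0 => fun z => if z = 0 then 1 else 0
  | n + 1 => fun z => ∑' y : ℤ × ℤ, q n y * step (z - y)

/-- Number of ±1 paths of length `n` from `0` to `k`. -/
def cpath : ℕ → ℤ → ℕ
  | 0, k => if k = 0 then 1 else 0
  | n + 1, k => cpath n (k - 1) + cpath n (k + 1)

lemma cpath_bound : ∀ (n : ℕ) (k : ℤ), n < k.natAbs → cpath n k = 0 := by
  intro n
  induction n with
  | zero => intro k hk; simp [cpath]; omega
  | succ n ih =>
      intro k hk
      simp only [cpath]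
      rw [ih (k - 1) (by omega), ih (k + 1) (by omega)]

lemma cpath_odd : ∀ (n : ℕ) (k : ℤ), ((n : ℤ) + k) % 2 = 1 → cpath n k = 0 := by
  intro n
  induction n with
  | zero => intro k hk; simp [cpath]; omega
  | succ n ih =>
      intro k hk
      simp only [cpath]
      rw [ih (k - 1) (by omega), ih (k + 1) (by omega)]

lemma cpath_choose : ∀ (n m : ℕ), cpath n (2 * (m : ℤ) - n) = n.choose m := by
  intro n
  induction n with
  | zero =>
      intro m
      rcases Nat.eq_zero_or_pos m with h | h
      · subst h; simp [cpath]
      · rw [Nat.choose_eq_zero_of_lt h]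
        simp only [cpath]
        rw [if_neg (by omega)]
  | succ n ih =>
      intro m
      cases m with
      | zero =>
          simp only [cpath, Nat.choose_zero_right]
          have h1 : 2 * ((0 : ℕ) : ℤ) - (n + 1 : ℕ) - 1 = -(n : ℤ) - 2 := by push_cast; ring
          have h2 : 2 * ((0 : ℕ) : ℤ) - (n + 1 : ℕ) + 1 = 2 * ((0 : ℕ) : ℤ) - n := by
            push_cast; ring
          rw [h1, h2, ih 0, cpath_bound n (-(n : ℤ) - 2) (by omega)]
          simp
      | succ m =>
          simp only [cpath]
          have h1 : 2 * ((m + 1 : ℕ) : ℤ) - (n + 1 : ℕ) - 1 = 2 * (m : ℤ) - n := by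
            push_cast; ring
          have h2 : 2 * ((m + 1 : ℕ) : ℤ) - (n + 1 : ℕ) + 1 = 2 * ((m + 1 : ℕ) : ℤ) - n := by
            push_cast; ring
          rw [h1, h2, ih m, ih (m + 1), Nat.choose_succ_succ]

lemma q_succ (n : ℕ) (x y : ℤ) :
    q (n + 1) (x, y) =
      (q n (x - 1, y) + q n (x + 1, y) + q n (x, y - 1) + q n (x, y + 1)) / 4 := by
  have hne : ∀ w : ℤ × ℤ,
      w ∉ ({(x - 1, y), (x + 1, y), (x, y - 1), (x, y + 1)} : Finset (ℤ × ℤ)) →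
      q n w * step ((x, y) - w) = 0 := by
    intro w hw
    obtain ⟨w1, w2⟩ := w
    simp only [Finset.mem_insert, Finset.mem_singleton, Prod.mk.injEq, not_or, not_and] at hw
    obtain ⟨h1, h2, h3, h4⟩ := hw
    have : step ((x, y) - (w1, w2)) = 0 := by
      rw [step, if_neg]
      simp only [Prod.mk_sub_mk, Prod.mk.injEq, not_or, not_and]
      omega
    rw [this, mul_zero]
  have := tsum_eq_sum (L := SummationFilter.unconditional (ℤ × ℤ)) hne
  simp only [q]
  rw [this]
  have d1 : ((x - 1, y) : ℤ × ℤ) ≠ (x + 1, y) := by simp [Prod.ext_iff]; try omega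
  have d2 : ((x - 1, y) : ℤ × ℤ) ≠ (x, y - 1) := by simp [Prod.ext_iff]; try omega
  have d3 : ((x - 1, y) : ℤ × ℤ) ≠ (x, y + 1) := by simp [Prod.ext_iff]; try omega
  have d4 : ((x + 1, y) : ℤ × ℤ) ≠ (x, y - 1) := by simp [Prod.ext_iff]; try omega
  have d5 : ((x + 1, y) : ℤ × ℤ) ≠ (x, y + 1) := by simp [Prod.ext_iff]; try omega
  have d6 : ((x, y - 1) : ℤ × ℤ) ≠ (x, y + 1) := by simp [Prod.ext_iff]; try omega
  rw [Finset.sum_insert (by simp [d1, d2, d3]),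
      Finset.sum_insert (by simp [d4, d5]),
      Finset.sum_insert (by simp [d6]),
      Finset.sum_singleton]
  have s1 : step ((x, y) - (x - 1, y)) = 1 / 4 := by
    have : ((x, y) : ℤ × ℤ) - (x - 1, y) = (1, 0) := by simp [Prod.ext_iff]
    rw [this, step]; norm_num
  have s2 : step ((x, y) - (x + 1, y)) = 1 / 4 := by
    have : ((x, y) : ℤ × ℤ) - (x + 1, y) = (-1, 0) := by simp [Prod.ext_iff]; try ring
    rw [this, step]; norm_num
  have s3 : step ((x, y) - (x, y - 1)) = 1 / 4 := by
    have : ((x, y) : ℤ × ℤ) - (x, y - 1) = (0, 1) := by simp [Prod.ext_iff]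
    rw [this, step]; norm_num
  have s4 : step ((x, y) - (x, y + 1)) = 1 / 4 := by
    have : ((x, y) : ℤ × ℤ) - (x, y + 1) = (0, -1) := by simp [Prod.ext_iff]; try ring
    rw [this, step]; norm_num
  rw [s1, s2, s3, s4]
  ring

lemma q_eq (n : ℕ) (x y : ℤ) :
    q n (x, y) = (cpath n (x + y) : ℝ) * (cpath n (x - y) : ℝ) / 4 ^ n := by
  induction n generalizing x y with
  | zero =>
      simp only [q, cpath]
      by_cases hx : x = 0
      · by_cases hy : y = 0
        · subst hx; subst hy; norm_num
        · subst hx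
          rw [if_neg (by simp [Prod.ext_iff, hy])]
          rcases (by omega : (0 : ℤ) + y ≠ 0 ∨ (0 : ℤ) - y ≠ 0) with h | h
          · rw [if_neg h]; simp
          · rw [if_neg h]; simp
      · rw [if_neg (by simp [Prod.ext_iff, hx])]
        rcases (by omega : x + y ≠ 0 ∨ x - y ≠ 0) with h | h
        · rw [if_neg h]; simp
        · rw [if_neg h]; simp
  | succ n ih =>
      rw [q_succ, ih, ih, ih, ih]
      simp only [cpath]
      have e1 : x - 1 + y = x + y - 1 := by ring
      have e2 : x - 1 - y = x - y - 1 := by ring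
      have e3 : x + 1 + y = x + y + 1 := by ring
      have e4 : x + 1 - y = x - y + 1 := by ring
      have e5 : x + (y - 1) = x + y - 1 := by ring
      have e6 : x - (y - 1) = x - y + 1 := by ring
      have e7 : x + (y + 1) = x + y + 1 := by ring
      have e8 : x - (y + 1) = x - y - 1 := by ring
      rw [e1, e2, e3, e4, e5, e6, e7, e8]
      push_cast
      ring

/-- For the simple symmetric random walk on `ℤ²` started at `0`:
`P(S_{2n} = 0) = (C(2n,n) 2^{-2n})²` and `P(S_{2n+1} = 0) = 0`. -/
theorem ssrw_return_probability (n : ℕ) :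
    q (2 * n) 0 = ((Nat.choose (2 * n) n : ℝ) * 2 ^ (-(2 * n : ℤ))) ^ 2 ∧
    q (2 * n + 1) 0 = 0 := by
  constructor
  · have h0 : q (2 * n) 0 = q (2 * n) ((0 : ℤ), (0 : ℤ)) := rfl
    rw [h0, q_eq]
    have hc : cpath (2 * n) ((0 : ℤ) + 0) = (2 * n).choose n := by
      have := cpath_choose (2 * n) n
      have harg : 2 * ((n : ℕ) : ℤ) - ((2 * n : ℕ) : ℤ) = (0 : ℤ) + 0 := by push_cast; ring
      rwa [harg] at this
    have hc2 : cpath (2 * n) ((0 : ℤ) - 0) = (2 * n).choose n := by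
      rw [(by ring : (0 : ℤ) - 0 = (0 : ℤ) + 0), hc]
    rw [hc, hc2,
      show (-(2 * n : ℤ)) = -((2 * n : ℕ) : ℤ) by push_cast; ring, zpow_neg, zpow_natCast]
    have h4 : (4 : ℝ) ^ (2 * n) = ((2 : ℝ) ^ (2 * n)) ^ 2 := by
      rw [show (4 : ℝ) = 2 ^ 2 by norm_num, ← pow_mul, ← pow_mul]
      ring_nf
    rw [h4]
    have h2 : (0 : ℝ) < (2 : ℝ) ^ (2 * n) := by positivity
    field_simp
  · have h0 : q (2 * n + 1) 0 = q (2 * n + 1) ((0 : ℤ), (0 : ℤ)) := rfl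
    rw [h0, q_eq]
    rw [cpath_odd (2 * n + 1) ((0 : ℤ) + 0) (by push_cast; omega)]
    simp
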